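/- arXiv:math/0105066 — 3 statements merged into one kernel-verified Lean document; each statement's English description precedes it below -/
import Mathlib

section
/- Let d ≥ 2, let ω ∈ KT_d and let T ∈ GL(d,ℤ) have simple eigenvalues λ₁, …, λ_d with 0 < |λ_d| ≤ ⋯ ≤ |λ₂| < 1 < |λ₁| and Tω = λ₁ω. Set β = −1 − ln|λ₁|/ln|λ₂|. Then ω is diophantine with exponent β: there exists a constant C > 0 such that |ω·k| > C·‖k‖^{−β−1} for every nonzero integer vector k ∈ ℤ^d, where ‖·‖ is the ℓ¹-norm. -/
open scoped BigOperators ENNReal Classical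
open Complex

noncomputable section

namespace Renorm

/-- ℓ¹ norm of an integer frequency vector. -/
def nZ {d : ℕ} (k : Fin d → ℤ) : ℝ := ∑ i, |(k i : ℝ)|

/-- `ℂ^m` with the ℓ¹ norm. -/
abbrev V (m : ℕ) : Type := PiLp 1 (fun _ : Fin m => ℂ)

/-- The Banach space underlying `𝒜_d(r)` (and `𝒜'_d(r)`):  an element stores, at
index `k ∈ ℤ^d`, the Fourier coefficient multiplied by the corresponding weight,
so that the `lp`-norm coincides with the norm `‖·‖_r` (resp. `‖·‖'_r`). -/
abbrev AA (d m : ℕ) : Type := lp (fun _ : (Fin d → ℤ) => V m) 1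

/-- weight of the norm of `𝒜_d(r)` -/
def w {d : ℕ} (r : ℝ) (k : Fin d → ℤ) : ℝ := Real.exp (r * nZ k)

/-- weight of the norm of `𝒜'_d(r)` -/
def w' {d : ℕ} (r : ℝ) (k : Fin d → ℤ) : ℝ := (1 + 2 * Real.pi * nZ k) * Real.exp (r * nZ k)

/-- Fourier coefficient of `a` regarded as an element of `𝒜_d(r)`. -/
def coeffA {d m : ℕ} (r : ℝ) (a : AA d m) (k : Fin d → ℤ) : V m := (w r k)⁻¹ • a k

/-- Fourier coefficient of `a` regarded as an element of `𝒜'_d(r)`. -/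
def coeffA' {d m : ℕ} (r : ℝ) (a : AA d m) (k : Fin d → ℤ) : V m := (w' r k)⁻¹ • a k

/-- `k · θ` -/
def kdot {d : ℕ} (k : Fin d → ℤ) (θ : V d) : ℂ := ∑ i, (k i : ℂ) * θ i

/-- the Fourier character `e^{2πi k·θ}` -/
def e2 {d : ℕ} (k : Fin d → ℤ) (θ : V d) : ℂ := Complex.exp (2 * Real.pi * Complex.I * kdot k θ)

/-- the function represented by `a`, regarded as an element of `𝒜_d(r)` -/
def funA {d m : ℕ} (r : ℝ) (a : AA d m) (θ : V d) : V m := ∑' k, e2 k θ • coeffA r a k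

/-- the function represented by `a`, regarded as an element of `𝒜'_d(r)` -/
def funA' {d m : ℕ} (r : ℝ) (a : AA d m) (θ : V d) : V m := ∑' k, e2 k θ • coeffA' r a k

/-- the complex domain `D(r)` -/
def Dom (d : ℕ) (r : ℝ) : Set (V d) := {θ | (∑ i, |(θ i).im|) < r / (2 * Real.pi)}

/-- the norm `‖·‖_s` of a family of Fourier coefficients -/
def normA {d m : ℕ} (s : ℝ) (c : (Fin d → ℤ) → V m) : ℝ := ∑' k, ‖c k‖ * w s k

/-- the norm `‖·‖'_s` of a family of Fourier coefficients -/
def normA' {d m : ℕ} (s : ℝ) (c : (Fin d → ℤ) → V m) : ℝ := ∑' k, ‖c k‖ * w' s k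

/-- the set `I_σ⁻(ω)` of far from resonance indices -/
def Iminus {d : ℕ} (σ : ℝ) (ω : V d) : Set (Fin d → ℤ) :=
  {k | σ * nZ k < ‖∑ i, ω i * (k i : ℂ)‖}

/-- the constant vector field `c` as an element of `𝒜_d(r)` / `𝒜'_d(r)`
(both weights are `1` at `k = 0`). -/
def const {d m : ℕ} (c : V m) : AA d m := lp.single 1 (0 : Fin d → ℤ) c

/-- the subspace of `𝒜_d` / `𝒜'_d` of vector fields with Fourier modes supported in `S` -/
def SubOn (d m : ℕ) (S : Set (Fin d → ℤ)) : Submodule ℂ (AA d m) where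
  carrier := {a | ∀ k ∉ S, a k = 0}
  add_mem' := by
    intro a b ha hb k hk
    rw [lp.coeFn_add, Pi.add_apply, ha k hk, hb k hk, add_zero]
  zero_mem' := by
    intro k _
    rw [lp.coeFn_zero, Pi.zero_apply]
  smul_mem' := by
    intro c a ha k hk
    rw [lp.coeFn_smul, Pi.smul_apply, ha k hk, smul_zero]

/-- real vector as a complex one -/
def toC {d : ℕ} (ω : Fin d → ℝ) : V d := WithLp.toLp 1 (fun i => (ω i : ℂ))


/-- Koch type vectors `KT_d`: `ω = c·(1, ω₂, …, ω_d)` with `c ≠ 0`, the `ωᵢ`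
real algebraic numbers and `ℚ(ω₂,…,ω_d)` of degree `d` over `ℚ`. -/
def KochType (d : ℕ) (ω : Fin d → ℝ) : Prop :=
  ∃ (c : ℝ) (ω0 : Fin d → ℝ), c ≠ 0 ∧ ω = c • ω0 ∧ (∀ h0 : 0 < d, ω0 ⟨0, h0⟩ = 1) ∧
    (∀ i, IsAlgebraic ℚ (ω0 i)) ∧
    Module.finrank ℚ (IntermediateField.adjoin ℚ (Set.range ω0) : IntermediateField ℚ ℝ) = d

open Matrix

/-- auxiliary: evaluation of the characteristic polynomial -/
lemma evalCharpoly {d : ℕ} (M : Matrix (Fin d) (Fin d) ℂ) (r : ℂ) :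
    M.charpoly.eval r = (r • (1 : Matrix (Fin d) (Fin d) ℂ) - M).det := by
  rw [Matrix.charpoly, eval_det, Matrix.matPolyEquiv_charmatrix]
  simp only [Polynomial.eval_sub, Polynomial.eval_X, Polynomial.eval_C]
  congr 2
  ext i j
  simp [Matrix.smul_apply, Matrix.one_apply, Matrix.diagonal, Pi.algebraMap_apply]

/-- auxiliary: dot product distributes over finite sums -/
lemma dotProduct_sum' {d : ℕ} (u : Fin d → ℂ) (f : Fin d → Fin d → ℂ) :
    u ⬝ᵥ (∑ j, f j) = ∑ j, u ⬝ᵥ f j := by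
  simp only [dotProduct, Finset.sum_apply, Finset.mul_sum]
  rw [Finset.sum_comm]

/-- auxiliary: the key quantitative estimate -/

lemma quantKey {L ρ a B E N : ℝ} (hL : 1 < L) (hρ0 : 0 < ρ) (hρ1 : ρ < 1)
    (ha : 0 < a) (hB : 1 ≤ B) (hN : 1 ≤ N)
    (h : ∀ n : ℕ, 1 ≤ a * L ^ n * E + B * ρ ^ n * N) :
    ((2 * B) ^ (Real.log L / Real.log ρ) / (4 * a * L)) * N ^ (Real.log L / Real.log ρ) < E := by
  have hlogL : 0 < Real.log L := Real.log_pos hL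
  have hlogρ : Real.log ρ < 0 := Real.log_neg hρ0 hρ1
  set γ : ℝ := Real.log L / (-Real.log ρ) with hγ
  have hγpos : 0 < γ := div_pos hlogL (by linarith)
  have hexp : Real.log L / Real.log ρ = -γ := by
    rw [hγ]; field_simp
  rw [hexp]
  have hBN : 0 < 2 * B * N := by nlinarith
  have hlogBN : 0 ≤ Real.log (2 * B * N) := by
    apply Real.log_nonneg; nlinarith
  set n : ℕ := ⌈Real.log (2 * B * N) / (-Real.log ρ)⌉₊ with hn
  have hnge : Real.log (2 * B * N) / (-Real.log ρ) ≤ (n : ℝ) := Nat.le_ceil _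
  have hnle : (n : ℝ) ≤ Real.log (2 * B * N) / (-Real.log ρ) + 1 := by
    exact le_of_lt (Nat.ceil_lt_add_one (div_nonneg hlogBN (by linarith)))
  -- ρ ^ n ≤ 1 / (2 * B * N)
  have hρn : ρ ^ n ≤ 1 / (2 * B * N) := by
    have h1 : (n : ℝ) * Real.log ρ ≤ -Real.log (2 * B * N) := by
      rw [div_le_iff₀ (by linarith)] at hnge
      nlinarith
    have h2 : ρ ^ n = Real.exp ((n : ℝ) * Real.log ρ) := by
      rw [← Real.log_pow, Real.exp_log (by positivity)]
    rw [h2]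
    calc Real.exp ((n:ℝ) * Real.log ρ) ≤ Real.exp (-Real.log (2*B*N)) := Real.exp_le_exp.2 h1
      _ = 1 / (2*B*N) := by rw [Real.exp_neg, Real.exp_log hBN, one_div]
  have hhalf : B * ρ ^ n * N ≤ 1 / 2 := by
    have : B * ρ ^ n * N ≤ B * (1 / (2 * B * N)) * N :=
      mul_le_mul_of_nonneg_right (mul_le_mul_of_nonneg_left hρn (by linarith)) (by linarith)
    calc B * ρ ^ n * N ≤ B * (1 / (2 * B * N)) * N := this
      _ = 1 / 2 := by field_simp
  have hE1 : 1 / 2 ≤ a * L ^ n * E := by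
    have := h n; linarith
  have hLn : (L : ℝ) ^ n = Real.exp ((n : ℝ) * Real.log L) := by
    rw [← Real.log_pow, Real.exp_log (by positivity)]
  have hLnle : (L : ℝ) ^ n ≤ L * (2 * B * N) ^ γ := by
    rw [hLn]
    have h1 : (n : ℝ) * Real.log L ≤ γ * Real.log (2*B*N) + Real.log L := by
      have := mul_le_mul_of_nonneg_right hnle (le_of_lt hlogL)
      calc (n:ℝ) * Real.log L ≤ (Real.log (2*B*N) / (-Real.log ρ) + 1) * Real.log L := this
        _ = γ * Real.log (2*B*N) + Real.log L := by rw [hγ]; ring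
    calc Real.exp ((n:ℝ) * Real.log L) ≤ Real.exp (γ * Real.log (2*B*N) + Real.log L) :=
          Real.exp_le_exp.2 h1
      _ = L * (2*B*N) ^ γ := by
          rw [Real.exp_add, Real.exp_log (by linarith), Real.rpow_def_of_pos hBN]
          ring_nf
  -- so E ≥ 1 / (2 a L (2BN)^γ)
  have hEpos : 0 < E := by
    by_contra hc
    push_neg at hc
    have : a * L ^ n * E ≤ 0 := mul_nonpos_of_nonneg_of_nonpos (by positivity) hc
    linarith
  have hfin : 1 / (2 * a * (L * (2*B*N)^γ)) ≤ E := by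
    rw [div_le_iff₀ (by positivity)]
    have h3 : a * L ^ n * E ≤ a * (L * (2*B*N)^γ) * E :=
      mul_le_mul_of_nonneg_right (mul_le_mul_of_nonneg_left hLnle (le_of_lt ha)) (le_of_lt hEpos)
    nlinarith
  have hNpos : (0:ℝ) < N := by linarith
  have h2B : (0:ℝ) < 2 * B := by linarith
  have hmul : (2*B*N)^γ = (2*B)^γ * N^γ := Real.mul_rpow (le_of_lt h2B) (le_of_lt hNpos)
  have heq : 1 / (2 * a * (L * (2*B*N)^γ)) = (2*B)^(-γ) * N^(-γ) / (2*a*L) := by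
    rw [hmul, Real.rpow_neg (le_of_lt h2B), Real.rpow_neg (le_of_lt hNpos)]
    have h1 : (0:ℝ) < (2*B)^γ := Real.rpow_pos_of_pos h2B γ
    have h2 : (0:ℝ) < N^γ := Real.rpow_pos_of_pos hNpos γ
    field_simp
  have hX : 0 < (2*B)^(-γ) * N^(-γ) := by
    have h1 : (0:ℝ) < (2*B)^(-γ) := Real.rpow_pos_of_pos h2B _
    have h2 : (0:ℝ) < N^(-γ) := Real.rpow_pos_of_pos hNpos _
    positivity
  calc (2*B)^(-γ) / (4*a*L) * N^(-γ) = ((2*B)^(-γ) * N^(-γ)) / (4*a*L) := by ring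
    _ < ((2*B)^(-γ) * N^(-γ)) / (2*a*L) := by
        apply div_lt_div_of_pos_left hX (by positivity) (by nlinarith)
    _ = 1 / (2 * a * (L * (2*B*N)^γ)) := heq.symm
    _ ≤ E := hfin


/-- Koch type vectors are diophantine with exponent
`β = -1 - ln|λ₁|/ln|λ₂|`. -/
theorem statement2 {d : ℕ} (hd : 2 ≤ d) (ω : Fin d → ℝ) (hKT : KochType d ω)
    (T : Matrix (Fin d) (Fin d) ℤ) (hdet : T.det = 1 ∨ T.det = -1)
    (lam : Fin d → ℂ)
    (hchar : (T.map ((↑) : ℤ → ℂ)).charpoly = ∏ j, (Polynomial.X - Polynomial.C (lam j)))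
    (hsimple : Function.Injective lam)
    (hmono : ∀ i j : Fin d, i ≤ j → ‖lam j‖ ≤ ‖lam i‖)
    (hpos : ∀ j, 0 < ‖lam j‖)
    (h2 : ‖lam ⟨1, by omega⟩‖ < 1)
    (h1 : 1 < ‖lam ⟨0, by omega⟩‖)
    (hev : (T.map ((↑) : ℤ → ℂ)).mulVec (fun i => (ω i : ℂ))
        = lam ⟨0, by omega⟩ • fun i => (ω i : ℂ))
    (β : ℝ)
    (hβ : β = -1 - Real.log (‖lam ⟨0, by omega⟩‖)
        / Real.log (‖lam ⟨1, by omega⟩‖)) :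
    ∃ C > 0, ∀ k : Fin d → ℤ, k ≠ 0 →
      C * nZ k ^ (-β - 1) < |∑ i, ω i * (k i : ℝ)| := by
  classical
  have hd0 : 0 < d := by omega
  set i0 : Fin d := ⟨0, by omega⟩ with hi0def
  set i1 : Fin d := ⟨1, by omega⟩ with hi1def
  set A : Matrix (Fin d) (Fin d) ℂ := T.map ((↑) : ℤ → ℂ) with hAdef
  -- eigenvalue facts
  set L : ℝ := ‖lam i0‖ with hLdef
  set ρ : ℝ := ‖lam i1‖ with hρdef
  have hL : 1 < L := h1
  have hρ0 : 0 < ρ := hpos i1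
  have hρ1 : ρ < 1 := h2
  -- left eigenvectors of A
  have hdet0 : ∀ j, (A - lam j • 1).det = 0 := by
    intro j
    have h1' : ((lam j) • (1 : Matrix (Fin d) (Fin d) ℂ) - A).det = 0 := by
      rw [← evalCharpoly, hchar]
      rw [Polynomial.eval_prod]
      exact Finset.prod_eq_zero (Finset.mem_univ j) (by simp)
    have h2' : A - lam j • 1 = (-1 : ℂ) • ((lam j) • (1 : Matrix (Fin d) (Fin d) ℂ) - A) := by
      ext i l; simp
    rw [h2', Matrix.det_smul, h1', mul_zero]
  have hex : ∀ j, ∃ v : Fin d → ℂ, v ≠ 0 ∧ v ᵥ* A = lam j • v := by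
    intro j
    obtain ⟨v, hv0, hv⟩ := Matrix.exists_vecMul_eq_zero_iff.2 (hdet0 j)
    refine ⟨v, hv0, ?_⟩
    rw [Matrix.vecMul_sub, sub_eq_zero] at hv
    rw [hv]
    ext i
    simp [Matrix.vecMul, dotProduct, Matrix.smul_apply, Matrix.one_apply, mul_comm]
  choose v hv0 hvA using hex
  have hfv : ∀ j, Aᵀ *ᵥ v j = lam j • v j := by
    intro j
    rw [Matrix.mulVec_transpose, hvA]
  have hli : LinearIndependent ℂ v :=
    Module.End.eigenvectors_linearIndependent' (Matrix.mulVecLin Aᵀ) lam hsimple v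
      (fun j => Module.End.hasEigenvector_iff.2
        ⟨Module.End.mem_eigenspace_iff.2 (hfv j), hv0 j⟩)
  haveI : Nonempty (Fin d) := ⟨i0⟩
  let b : Module.Basis (Fin d) ℂ (Fin d → ℂ) := basisOfLinearIndependentOfCardEqFinrank hli (by simp)
  have hbj : ∀ j, b j = v j := fun j => by
    simp [b, coe_basisOfLinearIndependentOfCardEqFinrank]
  set ωc : Fin d → ℂ := fun i => ((ω i : ℝ) : ℂ) with hωcdef
  have hev' : A *ᵥ ωc = lam i0 • ωc := hev
  -- orthogonality
  have horth : ∀ j, j ≠ i0 → ωc ⬝ᵥ v j = 0 := by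
    intro j hj
    have h1' : ωc ⬝ᵥ (Aᵀ *ᵥ v j) = (A *ᵥ ωc) ⬝ᵥ v j := by
      rw [Matrix.dotProduct_mulVec, Matrix.vecMul_transpose]
    rw [hfv j, hev'] at h1'
    rw [dotProduct_smul, smul_dotProduct] at h1'
    have hne : lam j - lam i0 ≠ 0 := sub_ne_zero.2 (fun h => hj (hsimple h))
    have h2' : (lam j - lam i0) * (ωc ⬝ᵥ v j) = 0 := by
      simp only [smul_eq_mul] at h1'
      linear_combination h1'
    exact (mul_eq_zero.1 h2').resolve_left hne
  -- nonvanishing of ω at i0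
  obtain ⟨cst, ω0f, hc, hωeq, hone, -, -⟩ := hKT
  have hω0 : ωc i0 ≠ 0 := by
    simp only [hωcdef]
    rw [hωeq]
    simp only [Pi.smul_apply, smul_eq_mul, hone hd0]
    simpa [hi0def, hone hd0] using hc
  -- expansion of dot products in the eigenbasis
  have hdotsum : ∀ x : Fin d → ℂ, ωc ⬝ᵥ x = ∑ j, b.repr x j * (ωc ⬝ᵥ v j) := by
    intro x
    conv_lhs => rw [← Module.Basis.sum_repr b x]
    rw [dotProduct_sum']
    refine Finset.sum_congr rfl fun j _ => ?_
    rw [hbj, dotProduct_smul, smul_eq_mul]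
  have hκne : ωc ⬝ᵥ v i0 ≠ 0 := by
    intro h0
    have hzero : ωc ⬝ᵥ (Pi.single i0 1 : Fin d → ℂ) = 0 := by
      rw [hdotsum]
      refine Finset.sum_eq_zero fun j _ => ?_
      by_cases hj : j = i0
      · rw [hj, h0, mul_zero]
      · rw [horth j hj, mul_zero]
    rw [dotProduct_single] at hzero
    exact hω0 (by simpa using hzero)
  set κ : ℝ := ‖ωc ⬝ᵥ v i0‖ with hκdef
  have hκpos : 0 < κ := by
    simpa [hκdef] using (norm_pos_iff.2 hκne)
  -- constants
  set a : ℝ := ‖v i0‖ / κ with hadef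
  have hapos : 0 < a := div_pos (norm_pos_iff.2 (hv0 i0)) hκpos
  set Cb : Fin d → ℝ := fun j => ‖LinearMap.toContinuousLinearMap (b.coord j)‖ with hCbdef
  have hCbnn : ∀ j, 0 ≤ Cb j := fun j => norm_nonneg _
  have hCb : ∀ j (x : Fin d → ℂ), ‖b.repr x j‖ ≤ Cb j * ‖x‖ := by
    intro j x
    have h3 := (LinearMap.toContinuousLinearMap (b.coord j)).le_opNorm x
    simpa [Module.Basis.coord_apply] using h3
  set B : ℝ := max 1 (∑ j, Cb j * ‖v j‖) with hBdef
  have hB : 1 ≤ B := le_max_left _ _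
  -- the eigen-power formula
  have hpown : ∀ (n : ℕ) (j : Fin d), (Aᵀ ^ n) *ᵥ v j = (lam j ^ n) • v j := by
    intro n j
    induction n with
    | zero => simp
    | succ n ih =>
        rw [pow_succ, ← Matrix.mulVec_mulVec, hfv j, Matrix.mulVec_smul, ih, pow_succ]
        rw [smul_smul, mul_comm]
  refine ⟨((2 * B) ^ (Real.log L / Real.log ρ) / (4 * a * L)), ?_, ?_⟩
  · have hrp : (0:ℝ) < (2*B) ^ (Real.log L / Real.log ρ) :=
      Real.rpow_pos_of_pos (by linarith) _
    positivity
  intro k hk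
  set kc : Fin d → ℂ := fun i => ((k i : ℤ) : ℂ) with hkcdef
  set N : ℝ := nZ k with hNdef
  have hNk : ∀ i, |((k i : ℤ) : ℝ)| ≤ N := by
    intro i
    rw [hNdef]
    exact Finset.single_le_sum (f := fun i => |((k i : ℤ) : ℝ)|)
      (fun j _ => abs_nonneg _) (Finset.mem_univ i)
  have hN : 1 ≤ N := by
    obtain ⟨i, hi⟩ := Function.ne_iff.1 hk
    calc (1:ℝ) ≤ |((k i : ℤ) : ℝ)| := by
          rw [← Int.cast_abs]
          exact_mod_cast Int.one_le_abs hi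
      _ ≤ N := hNk i
  have hkcnorm : ‖kc‖ ≤ N := by
    refine (pi_norm_le_iff_of_nonneg (by linarith)).2 fun i => ?_
    rw [hkcdef]
    simpa [Complex.norm_intCast] using hNk i
  set E : ℝ := ‖ωc ⬝ᵥ kc‖ with hEdef
  -- |c_{i0}| = E / κ
  have hc0 : ‖b.repr kc i0‖ = E / κ := by
    have h4 : ωc ⬝ᵥ kc = b.repr kc i0 * (ωc ⬝ᵥ v i0) := by
      rw [hdotsum kc]
      rw [Finset.sum_eq_single i0]
      · intro j _ hj; rw [horth j hj, mul_zero]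
      · intro h; exact absurd (Finset.mem_univ i0) h
    rw [hEdef, h4, norm_mul, eq_div_iff (ne_of_gt hκpos)]
  -- the master inequality
  have hmaster : ∀ n : ℕ, 1 ≤ a * L ^ n * E + B * ρ ^ n * N := by
    intro n
    -- lower bound: the iterate is a nonzero integer vector
    have hATn : (Aᵀ) ^ n = ((Tᵀ) ^ n).map ((↑) : ℤ → ℂ) := by
      have h5 : Aᵀ = (Int.castRingHom ℂ).mapMatrix Tᵀ := by
        rw [hAdef, ← Matrix.transpose_map]; rfl
      rw [h5, ← _root_.map_pow]; rfl
    set m : Fin d → ℤ := ((Tᵀ) ^ n) *ᵥ k with hmdef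
    have hmker : ((Tᵀ ^ n).map ((↑) : ℤ → ℂ)) *ᵥ kc = fun i => ((m i : ℤ) : ℂ) := by
      ext i
      rw [hmdef]
      exact (RingHom.map_mulVec (Int.castRingHom ℂ) (Tᵀ ^ n) k i).symm
    have hm0 : m ≠ 0 := by
      intro h0
      have hdet' : ((Tᵀ) ^ n).det = 0 :=
        Matrix.exists_mulVec_eq_zero_iff.1 ⟨k, hk, by rw [← hmdef, h0]⟩
      rw [Matrix.det_pow, Matrix.det_transpose] at hdet'
      have hne : T.det ≠ 0 := by rcases hdet with h | h <;> simp [h]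
      exact pow_ne_zero n hne hdet'
    have hlow : 1 ≤ ‖((Aᵀ) ^ n) *ᵥ kc‖ := by
      obtain ⟨i, hi⟩ := Function.ne_iff.1 hm0
      calc (1:ℝ) ≤ ‖((m i : ℤ) : ℂ)‖ := by
            rw [Complex.norm_intCast, ← Int.cast_abs]
            exact_mod_cast Int.one_le_abs hi
        _ = ‖(((Aᵀ) ^ n) *ᵥ kc) i‖ := by
            rw [hATn, hmker]
        _ ≤ ‖((Aᵀ) ^ n) *ᵥ kc‖ := norm_le_pi_norm _ i
    -- upper bound
    have hAn : ((Aᵀ) ^ n) *ᵥ kc = ∑ j, (b.repr kc j * lam j ^ n) • v j := by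
      conv_lhs => rw [← Module.Basis.sum_repr b kc]
      rw [← Matrix.mulVecLin_apply, _root_.map_sum]
      refine Finset.sum_congr rfl fun j _ => ?_
      rw [_root_.map_smul, Matrix.mulVecLin_apply, hbj, hpown n j, smul_smul]
    have hup : ‖((Aᵀ) ^ n) *ᵥ kc‖ ≤ a * L ^ n * E + B * ρ ^ n * N := by
      rw [hAn]
      calc ‖∑ j, (b.repr kc j * lam j ^ n) • v j‖
          ≤ ∑ j, ‖(b.repr kc j * lam j ^ n) • v j‖ := norm_sum_le _ _
        _ = ∑ j, ‖b.repr kc j‖ * ‖lam j‖ ^ n * ‖v j‖ := by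
            refine Finset.sum_congr rfl fun j _ => ?_
            rw [norm_smul, norm_mul, norm_pow]
        _ ≤ a * L ^ n * E + B * ρ ^ n * N := ?_
      rw [← Finset.add_sum_erase _ _ (Finset.mem_univ i0)]
      have hterm0 : ‖b.repr kc i0‖ * ‖lam i0‖ ^ n * ‖v i0‖
          = a * L ^ n * E := by
        rw [hc0, hadef, hLdef]
        field_simp
      have hrest : ∑ j ∈ Finset.univ.erase i0,
          ‖b.repr kc j‖ * ‖lam j‖ ^ n * ‖v j‖ ≤ B * ρ ^ n * N := by
        have hjle : ∀ j ∈ Finset.univ.erase i0,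
            ‖b.repr kc j‖ * ‖lam j‖ ^ n * ‖v j‖
              ≤ (Cb j * ‖v j‖) * (ρ ^ n * N) := by
          intro j hj
          have hj0 : j ≠ i0 := Finset.ne_of_mem_erase hj
          have hji1 : i1 ≤ j := by
            have h0 : (j : ℕ) ≠ 0 := by
              intro h
              exact hj0 (Fin.ext (by rw [h, hi0def]))
            rw [hi1def, Fin.le_def]
            simpa using Nat.one_le_iff_ne_zero.2 h0
          have hlamj : ‖lam j‖ ^ n ≤ ρ ^ n :=
            pow_le_pow_left₀ (norm_nonneg _) (hmono i1 j hji1) n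
          have hrepj : ‖b.repr kc j‖ ≤ Cb j * N := by
            calc ‖b.repr kc j‖ ≤ Cb j * ‖kc‖ := hCb j kc
              _ ≤ Cb j * N := mul_le_mul_of_nonneg_left hkcnorm (hCbnn j)
          calc ‖b.repr kc j‖ * ‖lam j‖ ^ n * ‖v j‖
              ≤ (Cb j * N) * ρ ^ n * ‖v j‖ := by
                apply mul_le_mul_of_nonneg_right _ (norm_nonneg _)
                exact mul_le_mul hrepj hlamj (by positivity) (by positivity)
            _ = (Cb j * ‖v j‖) * (ρ ^ n * N) := by ring
        calc ∑ j ∈ Finset.univ.erase i0,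
              ‖b.repr kc j‖ * ‖lam j‖ ^ n * ‖v j‖
            ≤ ∑ j ∈ Finset.univ.erase i0, (Cb j * ‖v j‖) * (ρ ^ n * N) :=
              Finset.sum_le_sum hjle
          _ ≤ ∑ j, (Cb j * ‖v j‖) * (ρ ^ n * N) := by
              apply Finset.sum_le_sum_of_subset_of_nonneg (Finset.erase_subset _ _)
              intro j _ _
              have := hCbnn j
              positivity
          _ = (∑ j, Cb j * ‖v j‖) * (ρ ^ n * N) := by rw [← Finset.sum_mul]
          _ ≤ B * (ρ ^ n * N) := by
              apply mul_le_mul_of_nonneg_right (le_max_right _ _) (by positivity)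
          _ = B * ρ ^ n * N := by ring
      rw [hterm0]
      linarith
    linarith
  -- apply the key quantitative lemma
  have hkey := quantKey hL hρ0 hρ1 hapos hB hN hmaster
  have hEeq : E = |∑ i, ω i * ((k i : ℤ) : ℝ)| := by
    rw [hEdef]
    have h6 : ωc ⬝ᵥ kc = (((∑ i, ω i * ((k i : ℤ) : ℝ)) : ℝ) : ℂ) := by
      rw [hωcdef, hkcdef]
      push_cast
      rfl
    rw [h6, Complex.norm_real, Real.norm_eq_abs]
  have hexp : -β - 1 = Real.log L / Real.log ρ := by
    rw [hβ, hLdef, hρdef]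
    ring
  rw [hexp, ← hEeq]
  exact hkey

end Renorm
end
end

section
/- Let ω ∈ ℂ^d, σ > 0 and ρ' > 0. For every g ∈ 𝕀_σ⁻(ω)𝒜_d(ρ') (i.e. g ∈ 𝒜_d(ρ') with g_k = 0 unless |ω·k| > σ‖k‖), the function (D·ω)⁻¹g with Fourier coefficients g_k/(2πi k·ω) for k ∈ I_σ⁻(ω) (and 0 otherwise) belongs to 𝕀_σ⁻(ω)𝒜'_d(ρ') and satisfies ‖(D·ω)⁻¹g‖'_{ρ'} ≤ (2/σ)·‖g‖_{ρ'}. Moreover, h = (D·ω)⁻¹g solves Dh·ω = g, i.e. (D·ω)⁻¹ is a bounded right inverse, of operator norm at most 2/σ, of the directional derivative operator h ↦ Dh·ω from 𝕀_σ⁻(ω)𝒜'_d(ρ') to 𝕀_σ⁻(ω)𝒜_d(ρ'). -/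
open scoped BigOperators ENNReal Classical
open Complex

noncomputable section

namespace Renorm

lemma one_le_nZ_of_mem {d : ℕ} {σ : ℝ} {ω : V d} (hσ : 0 < σ) {k : Fin d → ℤ}
    (hk : k ∈ Iminus σ ω) : 1 ≤ nZ k := by
  by_contra hlt
  push_neg at hlt
  have hk0 : ∀ i, k i = 0 := by
    intro i
    have h1 : |(k i : ℝ)| ≤ nZ k :=
      Finset.single_le_sum (f := fun i => |(k i : ℝ)|) (fun i _ => abs_nonneg _)
        (Finset.mem_univ i)
    have h2 : ((|k i| : ℤ) : ℝ) < 1 := by push_cast; exact lt_of_le_of_lt h1 hlt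
    have h3 : |k i| < 1 := by exact_mod_cast h2
    rcases abs_lt.mp h3 with ⟨ha, hb⟩
    omega
  have hn : nZ k = 0 := by simp [nZ, hk0]
  have := hk
  simp only [Iminus, Set.mem_setOf_eq, hn, mul_zero] at this
  simp [hk0] at this

lemma scalar_aux1 (t E : ℝ) (Z : ℂ) (ht : t ≠ 0) (hE : E ≠ 0) (hZ : Z ≠ 0) :
    (((t * E)⁻¹ : ℝ) : ℂ) * ((t : ℂ) * Z⁻¹) = Z⁻¹ * ((E⁻¹ : ℝ) : ℂ) := by
  have htc : (t : ℂ) ≠ 0 := Complex.ofReal_ne_zero.mpr ht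
  have hEc : (E : ℂ) ≠ 0 := Complex.ofReal_ne_zero.mpr hE
  push_cast
  field_simp

lemma scalar_aux2 (t E : ℝ) (Z : ℂ) (ht : t ≠ 0) (hE : E ≠ 0) (hZ : Z ≠ 0) :
    Z * (((t * E)⁻¹ : ℝ) : ℂ) * ((t : ℂ) * Z⁻¹) = ((E⁻¹ : ℝ) : ℂ) := by
  have htc : (t : ℂ) ≠ 0 := Complex.ofReal_ne_zero.mpr ht
  have hEc : (E : ℂ) ≠ 0 := Complex.ofReal_ne_zero.mpr hE
  push_cast
  field_simp

/-- the bounded right inverse `(D·ω)⁻¹` of the directional derivative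
`h ↦ Dh·ω` on the far-from-resonance subspace, with operator norm at most `2/σ`. -/
theorem statement10 {d : ℕ} (hd : 2 ≤ d) (ω : V d) (σ : ℝ) (hσ : 0 < σ)
    (ρ' : ℝ) (hρ' : 0 < ρ')
    (g : AA d d) (hg : ∀ k ∉ Iminus σ ω, g k = 0) :
    ∃ h : AA d d,
      (∀ k ∈ Iminus σ ω,
        coeffA' ρ' h k =
          (2 * Real.pi * Complex.I * ∑ i, (k i : ℂ) * ω i)⁻¹ • coeffA ρ' g k) ∧
      (∀ k ∉ Iminus σ ω, h k = 0) ∧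
      ‖h‖ ≤ 2 / σ * ‖g‖ ∧
      (∀ k, (2 * Real.pi * Complex.I * ∑ i, (k i : ℂ) * ω i) • coeffA' ρ' h k
          = coeffA ρ' g k) := by
  classical
  have hπ := Real.pi_pos
  obtain ⟨c, hc⟩ : ∃ c : (Fin d → ℤ) → ℂ, c = fun k =>
      ((1 + 2 * Real.pi * nZ k : ℝ) : ℂ) *
        (2 * Real.pi * Complex.I * ∑ i, (k i : ℂ) * ω i)⁻¹ := ⟨_, rfl⟩
  obtain ⟨f, hfdef⟩ : ∃ f : (Fin d → ℤ) → V d, f = fun k =>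
      if k ∈ Iminus σ ω then c k • g k else 0 := ⟨_, rfl⟩
  have hfpos : ∀ k ∈ Iminus σ ω, f k = c k • g k := by
    intro k hk; rw [hfdef]; simp [hk]
  have hfneg : ∀ k ∉ Iminus σ ω, f k = 0 := by
    intro k hk; rw [hfdef]; simp [hk]
  have habs : ∀ k : Fin d → ℤ, ‖∑ i, ω i * (k i : ℂ)‖
      = ‖∑ i, (k i : ℂ) * ω i‖ := by
    intro k
    congr 1
    exact Finset.sum_congr rfl fun i _ => mul_comm _ _
  have hπn : ∀ k ∈ Iminus σ ω, Real.pi ≤ Real.pi * nZ k := by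
    intro k hk
    have h1 := one_le_nZ_of_mem hσ hk
    nlinarith
  have hApos : ∀ k ∈ Iminus σ ω, 0 < ‖∑ i, (k i : ℂ) * ω i‖ := by
    intro k hk
    have h1 := one_le_nZ_of_mem hσ hk
    have hA : σ * nZ k < ‖∑ i, ω i * (k i : ℂ)‖ := hk
    rw [habs] at hA
    nlinarith
  have hSne : ∀ k ∈ Iminus σ ω,
      (2 * Real.pi * Complex.I * ∑ i, (k i : ℂ) * ω i) ≠ 0 := by
    intro k hk
    have h0 : (∑ i, (k i : ℂ) * ω i) ≠ 0 := by
      intro h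
      have := hApos k hk
      rw [h] at this
      simp at this
    exact mul_ne_zero (mul_ne_zero (mul_ne_zero two_ne_zero
      (Complex.ofReal_ne_zero.mpr Real.pi_ne_zero)) Complex.I_ne_zero) h0
  have hw'pos : ∀ k ∈ Iminus σ ω, (0 : ℝ) < 1 + 2 * Real.pi * nZ k := by
    intro k hk
    have := hπn k hk
    nlinarith
  have hcnorm : ∀ k ∈ Iminus σ ω, ‖c k‖ ≤ 2 / σ := by
    intro k hk
    have h1 := one_le_nZ_of_mem hσ hk
    have hA : σ * nZ k < ‖∑ i, ω i * (k i : ℂ)‖ := hk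
    rw [habs] at hA
    have hApos' := hApos k hk
    have hcn : ‖c k‖ = (1 + 2 * Real.pi * nZ k) *
        (2 * Real.pi * ‖∑ i, (k i : ℂ) * ω i‖)⁻¹ := by
      rw [hc]
      simp only [norm_mul, norm_inv, Complex.norm_real, Real.norm_eq_abs,
        Complex.norm_ofNat, Complex.norm_I, mul_one]
      rw [abs_of_pos (hw'pos k hk), abs_of_pos hπ]
    rw [hcn, inv_eq_one_div, mul_one_div, div_le_div_iff₀ (by positivity) hσ]
    have h2πn : 1 ≤ 2 * Real.pi * nZ k := by nlinarith [hπn k hk, Real.pi_gt_three]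
    nlinarith [mul_le_mul_of_nonneg_right h2πn hσ.le,
      mul_lt_mul_of_pos_left hA (show (0:ℝ) < 4 * Real.pi by nlinarith)]
  have hle : ∀ k, ‖f k‖ ≤ 2 / σ * ‖g k‖ := by
    intro k
    by_cases hk : k ∈ Iminus σ ω
    · rw [hfpos k hk, norm_smul]
      exact mul_le_mul_of_nonneg_right (hcnorm k hk) (norm_nonneg _)
    · rw [hfneg k hk, norm_zero]
      positivity
  have hgs : Summable fun k => ‖g k‖ := by
    have := (lp.memℓp g).summable (p := (1 : ℝ≥0∞)) (by norm_num)
    simpa using this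
  have hfs : Summable fun k => ‖f k‖ :=
    Summable.of_nonneg_of_le (fun k => norm_nonneg _) hle (hgs.mul_left (2 / σ))
  have hmem : Memℓp f 1 := memℓp_gen (by simpa using hfs)
  refine ⟨⟨f, hmem⟩, ?_, ?_, ?_, ?_⟩
  · intro k hk
    show (w' ρ' k)⁻¹ • f k =
      (2 * Real.pi * Complex.I * ∑ i, (k i : ℂ) * ω i)⁻¹ • ((w ρ' k)⁻¹ • g k)
    rw [hfpos k hk, ← Complex.coe_smul, ← Complex.coe_smul, smul_smul, smul_smul]
    congr 1
    rw [hc]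
    exact scalar_aux1 _ _ _ (hw'pos k hk).ne' (Real.exp_ne_zero _) (hSne k hk)
  · intro k hk
    exact hfneg k hk
  · have hnh : ‖(⟨f, hmem⟩ : AA d d)‖ = ∑' k, ‖f k‖ := by
      have h1' := lp.norm_rpow_eq_tsum (p := (1 : ℝ≥0∞)) (by norm_num)
        (⟨f, hmem⟩ : AA d d)
      simp only [ENNReal.toReal_one, Real.rpow_one] at h1'
      exact h1'
    have hng : ‖g‖ = ∑' k, ‖g k‖ := by
      have h1' := lp.norm_rpow_eq_tsum (p := (1 : ℝ≥0∞)) (by norm_num) g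
      simp only [ENNReal.toReal_one, Real.rpow_one] at h1'
      exact h1'
    rw [hnh, hng, ← tsum_mul_left]
    exact Summable.tsum_le_tsum hle hfs (hgs.mul_left _)
  · intro k
    show (2 * Real.pi * Complex.I * ∑ i, (k i : ℂ) * ω i) • ((w' ρ' k)⁻¹ • f k)
      = (w ρ' k)⁻¹ • g k
    by_cases hk : k ∈ Iminus σ ω
    · rw [hfpos k hk, ← Complex.coe_smul, ← Complex.coe_smul, smul_smul, smul_smul]
      congr 1
      rw [hc]
      exact scalar_aux2 _ _ _ (hw'pos k hk).ne' (Real.exp_ne_zero _) (hSne k hk)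
    · rw [hfneg k hk, hg k hk]
      simp


end Renorm
end
end

section
/- Let d ≥ 2, T ∈ GL(d,ℤ), 0 < κ < 1 and 0 < ρ' < ρ with κρ < ρ'. Let X ∈ 𝒜_d(ρ') be such that every index k ∈ ℤ^d with X_k ≠ 0 satisfies ‖Tᵀk‖ ≤ κ‖k‖. Then X∘T, with Fourier series Σ_k X_k e^{2πi(Tᵀk)·θ}, belongs to 𝒜_d(ρ) and ‖X∘T‖_ρ ≤ ‖X‖_{ρ'}. Moreover, for every β with 0 < β < ρ' − κρ one has Σ_k 2π‖Tᵀk‖·‖X_k‖·e^{ρ‖Tᵀk‖} ≤ (2πκ/β)·‖X‖_{ρ'}, and consequently ‖T⁻¹·(X∘T)‖'_ρ ≤ (1 + 2πκ/β)·‖T⁻¹‖·‖X‖_{ρ'}, where ‖T⁻¹‖ is the operator norm of T⁻¹ with respect to the ℓ¹-norm. -/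
open scoped BigOperators ENNReal Classical
open Complex

noncomputable section

namespace Renorm

lemma lp_one_norm {ι : Type*} {E : ι → Type*} [∀ i, NormedAddCommGroup (E i)] (f : lp E 1) :
    ‖f‖ = ∑' i, ‖f i‖ := by
  rw [lp.norm_eq_tsum_rpow (by norm_num) f]; simp

lemma lp_one_summable {ι : Type*} {E : ι → Type*} [∀ i, NormedAddCommGroup (E i)] (f : lp E 1) :
    Summable fun i => ‖f i‖ := by
  have := (lp.memℓp f).summable (p := 1) (by norm_num)
  simpa using this

lemma texp_le {β t : ℝ} (hβ : 0 < β) : t * Real.exp (-(β * t)) ≤ 1 / β := by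
  have h1 : β * t ≤ Real.exp (β * t) := by linarith [Real.add_one_le_exp (β * t)]
  have h2 : (0:ℝ) < Real.exp (β * t) := Real.exp_pos _
  rw [Real.exp_neg, ← div_eq_mul_inv, div_le_div_iff₀ h2 hβ]
  nlinarith

lemma exists_extend {d m : ℕ} (φ : (Fin d → ℤ) → (Fin d → ℤ)) (hinj : Function.Injective φ)
    (f : (Fin d → ℤ) → V m) {C : (Fin d → ℤ) → ℝ} (hfb : ∀ k, ‖f k‖ ≤ C k) (hC : Summable C) :
    ∃ Y : AA d m, (∀ k, Y (φ k) = f k) ∧ ‖Y‖ ≤ ∑' k, C k := by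
  classical
  set g := Function.extend φ f 0 with hgdef
  have hgφ : ∀ k, g (φ k) = f k := fun k => hinj.extend_apply f 0 k
  have hg0 : ∀ x ∉ Set.range φ, g x = 0 := by
    intro x hx
    rw [hgdef, Function.extend_apply' _ _ _ (by simpa using hx)]
    rfl
  have hsf : Summable fun k => ‖f k‖ :=
    Summable.of_nonneg_of_le (fun k => norm_nonneg _) hfb hC
  have hgsum : Summable fun x => ‖g x‖ := by
    refine (hinj.summable_iff (f := fun x => ‖g x‖) fun x hx => by simp [hg0 x hx]).mp ?_
    have : (fun x => ‖g x‖) ∘ φ = fun k => ‖f k‖ := funext fun k => by simp [hgφ k]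
    rw [this]; exact hsf
  have hgmem : Memℓp g 1 := memℓp_gen (by simpa using hgsum)
  refine ⟨⟨g, hgmem⟩, fun k => hgφ k, ?_⟩
  rw [lp_one_norm]
  have h1 : (∑' x, ‖(⟨g, hgmem⟩ : AA d m) x‖) = ∑' x, ‖g x‖ := rfl
  rw [h1, ← hinj.tsum_eq (f := fun x => ‖g x‖) ?_]
  · calc (∑' k, ‖g (φ k)‖) = ∑' k, ‖f k‖ := tsum_congr fun k => by rw [hgφ k]
      _ ≤ ∑' k, C k := Summable.tsum_le_tsum hfb hsf hC
  · intro x hx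
    simp only [Function.mem_support, ne_eq, not_not] at hx ⊢
    by_contra hxr
    exact hx (by simp [hg0 x (by simpa using hxr)])

lemma V_norm {d : ℕ} (u : V d) : ‖u‖ = ∑ i, ‖u i‖ := by
  rw [PiLp.norm_eq_sum (by norm_num)]
  simp

lemma mulVec_l1 {d : ℕ} (A : Matrix (Fin d) (Fin d) ℂ) (v u : V d)
    (hu : ∀ i, u i = A.mulVec v i) :
    ‖u‖ ≤ (⨆ j, ∑ i, ‖A i j‖) * ‖v‖ := by
  set M := ⨆ j, ∑ i, ‖A i j‖ with hM
  have hMcol : ∀ j, ∑ i, ‖A i j‖ ≤ M :=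
    fun j => le_ciSup (f := fun j => ∑ i, ‖A i j‖)
      (Set.Finite.bddAbove (Set.finite_range _)) j
  rw [V_norm u, V_norm v]
  calc ∑ i, ‖u i‖
      ≤ ∑ i, ∑ j, ‖A i j‖ * ‖v j‖ := by
        refine Finset.sum_le_sum fun i _ => ?_
        rw [hu i, Matrix.mulVec, dotProduct]
        refine le_trans (norm_sum_le _ _) ?_
        refine Finset.sum_le_sum fun j _ => ?_
        rw [norm_mul]
    _ = ∑ j, (∑ i, ‖A i j‖) * ‖v j‖ := by
        rw [Finset.sum_comm]
        simp [Finset.sum_mul]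
    _ ≤ ∑ j, M * ‖v j‖ :=
        Finset.sum_le_sum fun j _ => mul_le_mul_of_nonneg_right (hMcol j) (norm_nonneg _)
    _ = M * ∑ j, ‖v j‖ := (Finset.mul_sum _ _ _).symm

lemma M_nonneg {d : ℕ} (hd : 0 < d) (A : Matrix (Fin d) (Fin d) ℂ) :
    0 ≤ ⨆ j, ∑ i, ‖A i j‖ :=
  le_trans (Finset.sum_nonneg fun _ _ => norm_nonneg _)
    (le_ciSup (f := fun j => ∑ i, ‖A i j‖)
      (Set.Finite.bddAbove (Set.finite_range _)) (⟨0, hd⟩ : Fin d))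

/-- analyticity improvement estimates for the change of basis `X ↦ T⁻¹·(X∘T)`. -/
theorem statement15 {d : ℕ} (hd : 2 ≤ d) (T : Matrix (Fin d) (Fin d) ℤ)
    (hdet : T.det = 1 ∨ T.det = -1) (κ ρ ρ' : ℝ) (hκ0 : 0 < κ) (hκ1 : κ < 1)
    (hρ' : 0 < ρ') (hρ : ρ' < ρ) (hκρ : κ * ρ < ρ')
    (X : AA d d)
    (hsupp : ∀ k, X k ≠ 0 → nZ (T.transpose.mulVec k) ≤ κ * nZ k) :
    (∃ Y : AA d d,
      (∀ k, coeffA ρ Y (T.transpose.mulVec k) = coeffA ρ' X k) ∧ ‖Y‖ ≤ ‖X‖) ∧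
    ∀ β : ℝ, 0 < β → β < ρ' - κ * ρ →
      (∑' k : Fin d → ℤ, 2 * Real.pi * nZ (T.transpose.mulVec k) * ‖coeffA ρ' X k‖
          * Real.exp (ρ * nZ (T.transpose.mulVec k))) ≤ 2 * Real.pi * κ / β * ‖X‖ ∧
      ∃ Z : AA d d,
        (∀ k, coeffA' ρ Z (T.transpose.mulVec k)
            = (WithLp.toLp 1 ((T.map ((↑) : ℤ → ℂ))⁻¹.mulVec (coeffA ρ' X k)) : V d)) ∧
        ‖Z‖ ≤ (1 + 2 * Real.pi * κ / β)
            * (⨆ j : Fin d, ∑ i, ‖(T.map ((↑) : ℤ → ℂ))⁻¹ i j‖) * ‖X‖ := by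
  classical
  have hρpos : 0 < ρ := hρ'.trans hρ
  have hπ : (0:ℝ) < Real.pi := Real.pi_pos
  -- injectivity of k ↦ Tᵀ k
  have hdetu : IsUnit (T.transpose.det) := by
    rw [Matrix.det_transpose]
    rcases hdet with h | h <;> rw [h]
    · exact isUnit_one
    · exact isUnit_one.neg
  have hinj : Function.Injective (fun k : Fin d → ℤ => T.transpose.mulVec k) := by
    intro a b hab
    have h2 := congrArg (fun v => (T.transpose)⁻¹.mulVec v) hab
    simpa [Matrix.mulVec_mulVec, Matrix.nonsing_inv_mul _ hdetu, Matrix.one_mulVec] using h2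
  have hnZ : ∀ k : Fin d → ℤ, 0 ≤ nZ k := fun k => Finset.sum_nonneg fun i _ => abs_nonneg _
  have hw : ∀ (r : ℝ) (k : Fin d → ℤ), 0 < w r k := fun r k => Real.exp_pos _
  have hw' : ∀ (r : ℝ) (k : Fin d → ℤ), 0 < w' r k := fun r k => by
    have h1 := hnZ k
    have h2 : (0:ℝ) < 1 + 2 * Real.pi * nZ k := by nlinarith
    exact mul_pos h2 (Real.exp_pos _)
  -- key exponent inequality (A)
  have hA : ∀ k, X k ≠ 0 → Real.exp (ρ * nZ (T.transpose.mulVec k)) ≤ w ρ' k := by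
    intro k hk
    have h1 := hsupp k hk
    have hb := hnZ k
    have ha := hnZ (T.transpose.mulVec k)
    unfold w
    apply Real.exp_le_exp.mpr
    nlinarith
  have hXsum : Summable fun k => ‖X k‖ := lp_one_summable X
  have hXnorm : ‖X‖ = ∑' k, ‖X k‖ := lp_one_norm X
  have hcoeff : ∀ k, ‖coeffA ρ' X k‖ = (w ρ' k)⁻¹ * ‖X k‖ := by
    intro k
    rw [show coeffA ρ' X k = (w ρ' k)⁻¹ • (X k : V d) from rfl, norm_smul, Real.norm_eq_abs,
      _root_.abs_of_nonneg (inv_nonneg.mpr (hw ρ' k).le)]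
  constructor
  · -- part 1
    set f : (Fin d → ℤ) → V d :=
      fun k => (w ρ (T.transpose.mulVec k) * (w ρ' k)⁻¹) • (X k : V d) with hfdef
    have hfb : ∀ k, ‖f k‖ ≤ ‖X k‖ := by
      intro k
      by_cases hk : X k = 0
      · simp [hfdef, hk]
      · have h1 := hA k hk
        have h2 := hw ρ' k
        have h3 : ‖f k‖ = (w ρ (T.transpose.mulVec k) * (w ρ' k)⁻¹) * ‖X k‖ := by
          rw [hfdef, norm_smul, Real.norm_eq_abs,
            _root_.abs_of_nonneg (mul_nonneg (hw _ _).le (inv_nonneg.mpr (hw _ _).le))]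
        rw [h3]
        refine mul_le_of_le_one_left (norm_nonneg _) ?_
        rw [← div_eq_mul_inv, div_le_one h2]
        exact h1
    obtain ⟨Y, hY1, hY2⟩ := exists_extend _ hinj f hfb hXsum
    refine ⟨Y, ?_, ?_⟩
    · intro k
      show (w ρ (T.transpose.mulVec k))⁻¹ • Y (T.transpose.mulVec k) = (w ρ' k)⁻¹ • X k
      rw [hY1 k, hfdef, smul_smul, ← mul_assoc,
        inv_mul_cancel₀ (hw ρ (T.transpose.mulVec k)).ne', one_mul]
    · rw [hXnorm]; exact hY2
  · -- part 2
    intro β hβ0 hβ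
    have hκρβ : κ * ρ ≤ ρ' - β := by linarith
    -- key inequality (B)
    have hB : ∀ k, X k ≠ 0 →
        2 * Real.pi * nZ (T.transpose.mulVec k) * Real.exp (ρ * nZ (T.transpose.mulVec k))
          ≤ 2 * Real.pi * κ / β * w ρ' k := by
      intro k hk
      set a := nZ (T.transpose.mulVec k) with hadef
      set b := nZ k with hbdef
      have ha : 0 ≤ a := hnZ _
      have hb : 0 ≤ b := hnZ _
      have hab : a ≤ κ * b := hsupp k hk
      have step1 : Real.exp (ρ * a) ≤ Real.exp ((ρ' - β) * b) := by
        apply Real.exp_le_exp.mpr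
        nlinarith
      have step2 : a * Real.exp (ρ * a) ≤ κ * b * Real.exp ((ρ' - β) * b) :=
        mul_le_mul hab step1 (Real.exp_pos _).le (by nlinarith)
      have step3 : Real.exp ((ρ' - β) * b) = Real.exp (-(β * b)) * Real.exp (ρ' * b) := by
        rw [← Real.exp_add]; ring_nf
      have step4 : b * Real.exp (-(β * b)) ≤ 1 / β := texp_le hβ0
      have step5 : κ * b * Real.exp ((ρ' - β) * b) ≤ κ / β * Real.exp (ρ' * b) := by
        rw [step3]
        calc κ * b * (Real.exp (-(β * b)) * Real.exp (ρ' * b))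
            = (b * Real.exp (-(β * b))) * (κ * Real.exp (ρ' * b)) := by ring
          _ ≤ (1 / β) * (κ * Real.exp (ρ' * b)) :=
              mul_le_mul_of_nonneg_right step4 (by positivity)
          _ = κ / β * Real.exp (ρ' * b) := by ring
      have key : a * Real.exp (ρ * a) ≤ κ / β * Real.exp (ρ' * b) := le_trans step2 step5
      have hwb : w ρ' k = Real.exp (ρ' * b) := rfl
      rw [hwb]
      calc 2 * Real.pi * a * Real.exp (ρ * a)
          = (2 * Real.pi) * (a * Real.exp (ρ * a)) := by ring
        _ ≤ (2 * Real.pi) * (κ / β * Real.exp (ρ' * b)) :=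
            mul_le_mul_of_nonneg_left key (by positivity)
        _ = 2 * Real.pi * κ / β * Real.exp (ρ' * b) := by ring
    -- pointwise bound for the tsum
    have hterm : ∀ k, 2 * Real.pi * nZ (T.transpose.mulVec k) * ‖coeffA ρ' X k‖
        * Real.exp (ρ * nZ (T.transpose.mulVec k)) ≤ 2 * Real.pi * κ / β * ‖X k‖ := by
      intro k
      by_cases hk : X k = 0
      · rw [hcoeff k, hk]
        simp only [norm_zero, mul_zero, zero_mul]
        positivity
      · rw [hcoeff k]
        have h1 := mul_le_mul_of_nonneg_right (hB k hk)
          (mul_nonneg (inv_nonneg.mpr (hw ρ' k).le) (norm_nonneg (X k)))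
        have h3 : 2 * Real.pi * κ / β * w ρ' k * ((w ρ' k)⁻¹ * ‖X k‖)
            = 2 * Real.pi * κ / β * ‖X k‖ := by
          field_simp [(hw ρ' k).ne']
        linarith [h1, h3]
    have hCsum : Summable fun k : Fin d → ℤ => 2 * Real.pi * κ / β * ‖X k‖ :=
      hXsum.mul_left _
    have htermsum : Summable fun k : Fin d → ℤ =>
        2 * Real.pi * nZ (T.transpose.mulVec k) * ‖coeffA ρ' X k‖
          * Real.exp (ρ * nZ (T.transpose.mulVec k)) := by
      refine Summable.of_nonneg_of_le (fun k => ?_) hterm hCsum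
      have := hnZ (T.transpose.mulVec k)
      positivity
    constructor
    · calc (∑' k : Fin d → ℤ, 2 * Real.pi * nZ (T.transpose.mulVec k) * ‖coeffA ρ' X k‖
            * Real.exp (ρ * nZ (T.transpose.mulVec k)))
          ≤ ∑' k : Fin d → ℤ, 2 * Real.pi * κ / β * ‖X k‖ :=
            Summable.tsum_le_tsum hterm htermsum hCsum
        _ = 2 * Real.pi * κ / β * ∑' k, ‖X k‖ := tsum_mul_left
        _ = 2 * Real.pi * κ / β * ‖X‖ := by rw [hXnorm]
    · -- the element Z
      set Tinv := (T.map ((↑) : ℤ → ℂ))⁻¹ with hTinv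
      set M := ⨆ j : Fin d, ∑ i, ‖Tinv i j‖ with hMdef
      have hM0 : 0 ≤ M := M_nonneg (by omega) Tinv
      set f' : (Fin d → ℤ) → V d :=
        fun k => (w' ρ (T.transpose.mulVec k)) • (WithLp.toLp 1 (Tinv.mulVec (coeffA ρ' X k)) : V d) with hf'def
      have hw'A : ∀ k, X k ≠ 0 →
          w' ρ (T.transpose.mulVec k) ≤ (1 + 2 * Real.pi * κ / β) * w ρ' k := by
        intro k hk
        have h1 := hA k hk
        have h2 := hB k hk
        have h3 : w' ρ (T.transpose.mulVec k)
            = (1 + 2 * Real.pi * nZ (T.transpose.mulVec k))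
              * Real.exp (ρ * nZ (T.transpose.mulVec k)) := rfl
        rw [h3]
        have h4 := Real.exp_pos (ρ * nZ (T.transpose.mulVec k))
        have h5 : w ρ' k = Real.exp (ρ' * nZ k) := rfl
        nlinarith [h1, h2]
      have hf'b : ∀ k, ‖f' k‖ ≤ (1 + 2 * Real.pi * κ / β) * M * ‖X k‖ := by
        intro k
        set x : V d := (WithLp.toLp 1 (Tinv.mulVec (coeffA ρ' X k)) : V d) with hxdef
        have hmv : ‖x‖ ≤ M * ‖coeffA ρ' X k‖ :=
          mulVec_l1 Tinv (coeffA ρ' X k) x (fun i => rfl)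
        have h1 : ‖f' k‖ = w' ρ (T.transpose.mulVec k) * ‖x‖ := by
          rw [show f' k = (w' ρ (T.transpose.mulVec k)) • x from rfl, norm_smul,
            Real.norm_eq_abs, _root_.abs_of_nonneg (hw' ρ (T.transpose.mulVec k)).le]
        rw [h1]
        by_cases hk : X k = 0
        · have hc0 : ‖coeffA ρ' X k‖ = 0 := by rw [hcoeff k, hk, norm_zero, mul_zero]
          have : ‖X k‖ = 0 := by rw [hk, norm_zero]
          rw [this, mul_zero]
          calc w' ρ (T.transpose.mulVec k) * ‖x‖
              ≤ w' ρ (T.transpose.mulVec k) * (M * ‖coeffA ρ' X k‖) :=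
                mul_le_mul_of_nonneg_left hmv (hw' _ _).le
            _ = 0 := by rw [hc0, mul_zero, mul_zero]
        · have h2 : w' ρ (T.transpose.mulVec k) * ‖x‖
              ≤ w' ρ (T.transpose.mulVec k) * (M * ((w ρ' k)⁻¹ * ‖X k‖)) := by
            rw [← hcoeff k]
            exact mul_le_mul_of_nonneg_left hmv (hw' _ _).le
          have h3 := mul_le_mul_of_nonneg_right (hw'A k hk)
            (mul_nonneg hM0 (mul_nonneg (inv_nonneg.mpr (hw ρ' k).le) (norm_nonneg (X k))))
          have h4 : (1 + 2 * Real.pi * κ / β) * w ρ' k * (M * ((w ρ' k)⁻¹ * ‖X k‖))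
              = (1 + 2 * Real.pi * κ / β) * M * ‖X k‖ := by
            field_simp [(hw ρ' k).ne']
          linarith [h2, h3, h4]
      have hC'sum : Summable fun k : Fin d → ℤ => (1 + 2 * Real.pi * κ / β) * M * ‖X k‖ :=
        hXsum.mul_left _
      obtain ⟨Z, hZ1, hZ2⟩ := exists_extend _ hinj f' hf'b hC'sum
      refine ⟨Z, ?_, ?_⟩
      · intro k
        show (w' ρ (T.transpose.mulVec k))⁻¹ • Z (T.transpose.mulVec k)
            = (WithLp.toLp 1 (Tinv.mulVec (coeffA ρ' X k)) : V d)
        rw [hZ1 k, hf'def, smul_smul,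
          inv_mul_cancel₀ (hw' ρ (T.transpose.mulVec k)).ne', one_smul]
      · calc ‖Z‖ ≤ ∑' k : Fin d → ℤ, (1 + 2 * Real.pi * κ / β) * M * ‖X k‖ := hZ2
          _ = (1 + 2 * Real.pi * κ / β) * M * ∑' k, ‖X k‖ := tsum_mul_left
          _ = (1 + 2 * Real.pi * κ / β) * M * ‖X‖ := by rw [hXnorm]

end Renorm
end
end
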